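/- arXiv:1903.08560 — 2 statements merged into one kernel-verified Lean document; each statement's English description precedes it below -/
import Mathlib

section
/- Fix X ∈ ℝ^{n×p} and y ∈ ℝ^n. Initialize β⁽⁰⁾ = 0 and run gradient descent on the least squares loss, β⁽ᵏ⁾ = β⁽ᵏ⁻¹⁾ + t Xᵀ(y − Xβ⁽ᵏ⁻¹⁾) for k = 1,2,3,…, with step size 0 < t ≤ 1/λ_max(XᵀX), where λ_max(XᵀX) is the largest eigenvalue of XᵀX. Then β⁽ᵏ⁾ converges, as k → ∞, to the minimum ℓ₂-norm least squares solution β̂ = (XᵀX)⁺Xᵀy. -/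
open Matrix Filter Topology

noncomputable section

/-- The Moore–Penrose pseudoinverse of a real matrix, defined as the
ridgeless limit `A⁺ = lim_{δ → 0⁺} (AᵀA + δ I)⁻¹ Aᵀ`. -/
def mpinv {m k : ℕ} (A : Matrix (Fin m) (Fin k) ℝ) : Matrix (Fin k) (Fin m) ℝ :=
  limUnder (nhdsWithin (0 : ℝ) (Set.Ioi 0))
    (fun δ => (Aᵀ * A + δ • (1 : Matrix (Fin k) (Fin k) ℝ))⁻¹ * Aᵀ)

section Aux

variable {p : ℕ} {U : Matrix (Fin p) (Fin p) ℝ}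

lemma conj_mul_conj (hU2 : star U * U = 1) (d e : Fin p → ℝ) :
    (U * diagonal d * star U) * (U * diagonal e * star U)
      = U * diagonal (fun i => d i * e i) * star U := by
  have h : star U * (U * (diagonal e * star U)) = diagonal e * star U := by
    rw [← mul_assoc, hU2, one_mul]
  simp only [mul_assoc, h, ← Matrix.diagonal_mul_diagonal]

lemma conj_add (d e : Fin p → ℝ) :
    (U * diagonal d * star U) + (U * diagonal e * star U)
      = U * diagonal (fun i => d i + e i) * star U := by
  have : diagonal d + diagonal e = diagonal (fun i => d i + e i) := by
    rw [Matrix.diagonal_add]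
  rw [← add_mul, ← mul_add, this]

lemma conj_inv' (hU1 : U * star U = 1) (hU2 : star U * U = 1)
    (d : Fin p → ℝ) (hd : ∀ i, d i ≠ 0) :
    (U * diagonal d * star U)⁻¹ = U * diagonal (fun i => (d i)⁻¹) * star U := by
  apply Matrix.inv_eq_right_inv
  rw [conj_mul_conj hU2]
  have : (fun i => d i * (d i)⁻¹) = fun _ => (1 : ℝ) :=
    funext fun i => mul_inv_cancel₀ (hd i)
  rw [this, Matrix.diagonal_one, mul_one, hU1]

end Aux

/-- Gradient descent on the least squares loss, started at `0`
with step size `0 < t ≤ 1/λ_max(XᵀX)`, converges to the minimum ℓ₂-norm least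
squares solution `β̂ = (XᵀX)⁺ Xᵀ y`. -/
theorem gradient_descent_converges_to_min_norm_ls
    {n p : ℕ} (X : Matrix (Fin n) (Fin p) ℝ) (y : Fin n → ℝ)
    (hH : (Xᵀ * X).IsHermitian)
    (t : ℝ) (ht0 : 0 < t) (ht1 : t ≤ 1 / (⨆ i, hH.eigenvalues i))
    (β : ℕ → Fin p → ℝ) (hβ0 : β 0 = 0)
    (hβ : ∀ k : ℕ, β (k + 1) = β k + t • (Xᵀ.mulVec (y - X.mulVec (β k)))) :
    Tendsto β atTop (𝓝 ((mpinv (Xᵀ * X) * Xᵀ).mulVec y)) := by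
  classical
  by_cases hL : 0 < ⨆ i, hH.eigenvalues i
  swap
  · exfalso
    have h1 : 1 / (⨆ i, hH.eigenvalues i) ≤ 0 := by
      rcases (not_lt.mp hL).lt_or_eq with h | h
      · exact le_of_lt (one_div_neg.mpr h)
      · rw [h]; simp
    linarith
  set lam := hH.eigenvalues with hlam
  set U : Matrix (Fin p) (Fin p) ℝ := (hH.eigenvectorUnitary : Matrix (Fin p) (Fin p) ℝ) with hUdef
  have hU1 : U * star U = 1 := Matrix.mem_unitaryGroup_iff.mp hH.eigenvectorUnitary.2
  have hU2 : star U * U = 1 := Matrix.mem_unitaryGroup_iff'.mp hH.eigenvectorUnitary.2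
  have spec : Xᵀ * X = U * diagonal lam * star U := by
    have h := hH.spectral_theorem
    simpa [RCLike.ofReal_real_eq_id, Function.id_comp] using h
  -- eigenvalues are nonnegative
  have hPSD : (Xᵀ * X).PosSemidef := by
    have h := Matrix.posSemidef_conjTranspose_mul_self X
    rwa [Matrix.conjTranspose_eq_transpose_of_trivial] at h
  have hnn : ∀ i, 0 ≤ lam i := fun i => hPSD.eigenvalues_nonneg i
  have htlam : ∀ i, t * lam i ≤ 1 := by
    intro i
    have hle : lam i ≤ ⨆ j, lam j :=
      le_ciSup (Set.Finite.bddAbove (Set.finite_range lam)) i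
    have h2 : t * lam i ≤ (1 / (⨆ j, lam j)) * lam i :=
      mul_le_mul_of_nonneg_right ht1 (hnn i)
    have h3 : (1 / (⨆ j, lam j)) * lam i ≤ (1 / (⨆ j, lam j)) * (⨆ j, lam j) :=
      mul_le_mul_of_nonneg_left hle (le_of_lt (one_div_pos.mpr hL))
    have h4 : (1 / (⨆ j, lam j)) * (⨆ j, lam j) = 1 := one_div_mul_cancel (ne_of_gt hL)
    linarith
  -- M and coordinates
  set M := X * U with hM
  have hsUXt : star U * Xᵀ = Mᵀ := by
    rw [hM, Matrix.transpose_mul, ← Matrix.conjTranspose_eq_transpose_of_trivial U,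
      ← Matrix.star_eq_conjTranspose]
  set c := Mᵀ.mulVec y with hc
  have hMtM : Mᵀ * M = diagonal lam := by
    have h1 : Mᵀ * M = star U * (Xᵀ * X) * U := by
      simp only [← hsUXt, hM, Matrix.mul_assoc]
      rw [Matrix.transpose_mul, ← Matrix.conjTranspose_eq_transpose_of_trivial U,
        ← Matrix.star_eq_conjTranspose, Matrix.mul_assoc]
    rw [h1, spec]
    calc star U * (U * diagonal lam * star U) * U
        = (star U * U) * diagonal lam * (star U * U) := by
          simp only [mul_assoc]
      _ = diagonal lam := by rw [hU2, one_mul, mul_one]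
  have hzeroM : ∀ i, lam i = 0 → ∀ j, M j i = 0 := by
    intro i hi j
    have hdiag : ∑ j, M j i ^ 2 = lam i := by
      have h := congrFun (congrFun hMtM i) i
      simpa [Matrix.mul_apply, Matrix.diagonal_apply_eq, Matrix.transpose_apply,
        pow_two] using h
    have hsum : ∑ j, M j i ^ 2 = 0 := by rw [hdiag, hi]
    have h := (Finset.sum_eq_zero_iff_of_nonneg
      (fun j _ => sq_nonneg (M j i))).mp hsum j (Finset.mem_univ j)
    exact (pow_eq_zero_iff two_ne_zero).mp h
  have hc0 : ∀ i, lam i = 0 → c i = 0 := by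
    intro i hi
    simp [hc, Matrix.mulVec, dotProduct, Matrix.transpose_apply, hzeroM i hi]
  -- coordinates of the iterates
  set b : ℕ → Fin p → ℝ := fun k => (star U).mulVec (β k) with hb
  have hβb : ∀ k, β k = U.mulVec (b k) := by
    intro k
    rw [hb]
    simp only [Matrix.mulVec_mulVec, hU1, Matrix.one_mulVec]
  have hDsU : star U * (Xᵀ * X) = diagonal lam * star U := by
    rw [spec, ← mul_assoc, ← mul_assoc, hU2, one_mul]
  have hstepv : ∀ k, b (k + 1) = b k + t • (c - (diagonal lam).mulVec (b k)) := by
    intro k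
    have key : (star U).mulVec (Xᵀ.mulVec (y - X.mulVec (β k)))
        = c - (diagonal lam).mulVec (b k) := by
      have e1 : (star U).mulVec (Xᵀ.mulVec y) = c := by
        rw [Matrix.mulVec_mulVec, hsUXt]
      have e2 : (star U).mulVec (Xᵀ.mulVec (X.mulVec (β k)))
          = (diagonal lam).mulVec (b k) := by
        rw [Matrix.mulVec_mulVec, Matrix.mulVec_mulVec, Matrix.mulVec_mulVec,
          Matrix.mul_assoc, hDsU, ← Matrix.mulVec_mulVec]
      rw [Matrix.mulVec_sub, Matrix.mulVec_sub, e1, e2]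
    rw [hb]
    simp only [hβ k, Matrix.mulVec_add, Matrix.mulVec_smul, key]
    rfl
  have hstep : ∀ k i, b (k + 1) i = b k i + t * (c i - lam i * b k i) := by
    intro k i
    rw [hstepv k]
    simp [Matrix.mulVec_diagonal]
  -- closed form
  have hbk : ∀ k i, b k i =
      if lam i = 0 then 0 else (c i / lam i) * (1 - (1 - t * lam i) ^ k) := by
    intro k
    induction k with
    | zero =>
      intro i
      have : b 0 i = 0 := by rw [hb]; simp [hβ0]
      rw [this]
      split <;> simp
    | succ k ih =>
      intro i
      rw [hstep k i, ih i]
      by_cases hi : lam i = 0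
      · simp [hi, hc0 i hi]
      · simp only [if_neg hi]
        field_simp
        ring
  -- limits of coordinates
  have hblim : ∀ i, Tendsto (fun k => b k i) atTop (𝓝 ((lam i)⁻¹ * c i)) := by
    intro i
    by_cases hi : lam i = 0
    · have heq : (fun k => b k i) = fun _ => (0 : ℝ) := by
        funext k; rw [hbk k i, if_pos hi]
      rw [heq, hi, _root_.inv_zero, zero_mul]
      exact tendsto_const_nhds
    · have hpos : 0 < lam i := lt_of_le_of_ne (hnn i) (Ne.symm hi)
      have h1 : |1 - t * lam i| < 1 := by
        rw [abs_lt]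
        constructor
        · have := htlam i; linarith
        · have : 0 < t * lam i := mul_pos ht0 hpos; linarith
      have hpow : Tendsto (fun k : ℕ => (1 - t * lam i) ^ k) atTop (𝓝 0) :=
        tendsto_pow_atTop_nhds_zero_of_abs_lt_one h1
      have heq : (fun k => b k i) = fun k => (c i / lam i) * (1 - (1 - t * lam i) ^ k) := by
        funext k; rw [hbk k i, if_neg hi]
      have hval : (lam i)⁻¹ * c i = (c i / lam i) * (1 - 0) := by
        rw [sub_zero, mul_one, div_eq_mul_inv, mul_comm]
      rw [heq, hval]
      exact (tendsto_const_nhds.sub hpow).const_mul _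
  have hβlim : Tendsto β atTop (𝓝 (U.mulVec (fun i => (lam i)⁻¹ * c i))) := by
    rw [tendsto_pi_nhds]
    intro j
    have hrw : (fun k => β k j) = fun k => ∑ i, U j i * b k i := by
      funext k
      rw [hβb k]
      simp [Matrix.mulVec, dotProduct]
    have hval : U.mulVec (fun i => (lam i)⁻¹ * c i) j
        = ∑ i, U j i * ((lam i)⁻¹ * c i) := by
      simp [Matrix.mulVec, dotProduct]
    rw [hrw, hval]
    exact tendsto_finset_sum _ (fun i _ => (hblim i).const_mul _)
  -- identify the limit with the pseudoinverse formula
  have hT : (Xᵀ * X)ᵀ = Xᵀ * X := by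
    rw [← Matrix.conjTranspose_eq_transpose_of_trivial]; exact hH
  have hmp : mpinv (Xᵀ * X) = U * diagonal (fun i => (lam i)⁻¹) * star U := by
    unfold mpinv
    apply Filter.Tendsto.limUnder_eq
    have hev : (fun δ : ℝ =>
        ((Xᵀ * X)ᵀ * (Xᵀ * X) + δ • (1 : Matrix (Fin p) (Fin p) ℝ))⁻¹ * (Xᵀ * X)ᵀ)
          =ᶠ[𝓝[>] (0 : ℝ)]
        (fun δ : ℝ => U * diagonal (fun i => (lam i * lam i + δ)⁻¹ * lam i) * star U) := by
      filter_upwards [self_mem_nhdsWithin] with δ hδ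
      have hδ0 : (0 : ℝ) < δ := hδ
      have e2 : δ • (1 : Matrix (Fin p) (Fin p) ℝ)
          = U * diagonal (fun _ : Fin p => δ) * star U := by
        rw [← Matrix.smul_one_eq_diagonal, Matrix.mul_smul, Matrix.smul_mul,
          mul_one, hU1]
      have hsum : (Xᵀ * X)ᵀ * (Xᵀ * X) + δ • (1 : Matrix (Fin p) (Fin p) ℝ)
          = U * diagonal (fun i => lam i * lam i + δ) * star U := by
        rw [hT, spec, conj_mul_conj hU2, e2, conj_add]
      have hf : ∀ i, lam i * lam i + δ ≠ 0 := by
        intro i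
        have : 0 ≤ lam i * lam i := mul_self_nonneg _
        positivity
      rw [hsum, conj_inv' hU1 hU2 _ hf, hT, spec, conj_mul_conj hU2]
    refine Filter.Tendsto.congr' hev.symm ?_
    have hψ : Continuous (fun d : Fin p → ℝ =>
        U * diagonal d * star U) :=
      (continuous_const.matrix_mul continuous_id.matrix_diagonal).matrix_mul
        continuous_const
    have hφ : Tendsto (fun δ : ℝ => fun i => (lam i * lam i + δ)⁻¹ * lam i)
        (𝓝[>] (0 : ℝ)) (𝓝 (fun i => (lam i)⁻¹)) := by
      rw [tendsto_pi_nhds]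
      intro i
      by_cases hi : lam i = 0
      · simp only [hi, mul_zero, _root_.inv_zero]
        exact tendsto_const_nhds
      · have h2 : lam i * lam i ≠ 0 := mul_ne_zero hi hi
        have h3 : Tendsto (fun δ : ℝ => (lam i * lam i + δ)⁻¹ * lam i)
            (𝓝 0) (𝓝 ((lam i * lam i + 0)⁻¹ * lam i)) := by
          refine Tendsto.mul_const _ (Tendsto.inv₀ ?_ ?_)
          · exact (continuous_const.add continuous_id).tendsto 0
          · rwa [add_zero]
        have h4 := h3.mono_left (nhdsWithin_le_nhds (s := Set.Ioi (0:ℝ)))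
        have hval : (lam i * lam i + 0)⁻¹ * lam i = (lam i)⁻¹ := by
          rw [add_zero]; field_simp
        rwa [hval] at h4
    exact (hψ.tendsto _).comp hφ
  have htarget : (mpinv (Xᵀ * X) * Xᵀ).mulVec y = U.mulVec (fun i => (lam i)⁻¹ * c i) := by
    rw [hmp]
    have e1 : U * diagonal (fun i => (lam i)⁻¹) * star U * Xᵀ
        = U * (diagonal (fun i => (lam i)⁻¹) * Mᵀ) := by
      rw [Matrix.mul_assoc, Matrix.mul_assoc, hsUXt]
    have e3 : (diagonal fun i => (lam i)⁻¹) *ᵥ (Mᵀ *ᵥ y) = fun i => (lam i)⁻¹ * c i := by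
      funext i; exact Matrix.mulVec_diagonal _ _ _
    rw [e1, ← Matrix.mulVec_mulVec, ← Matrix.mulVec_mulVec, e3]
  rw [htarget]
  exact hβlim

end
end

section
/- For every k ∈ ℕ there exist absolute constants C_{1,k}, C_{2,k} < ∞ such that: for any two functions f, g : [x−Δ, x+Δ] → ℝ that are (2k+1) times differentiable with bounded derivatives, and any δ ∈ (0, Δ/k), |f′(x) − g′(x)| ≤ (C_{1,k}/δ) ‖f−g‖_∞ + C_{2,k} ‖f^{(2k+1)} − g^{(2k+1)}‖_∞ δ^{2k}, where ‖·‖_∞ denotes the supremum norm on [x−Δ, x+Δ] and f^{(2k+1)} is the (2k+1)-th derivative. -/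
open Set Matrix
open scoped Nat


/-- Taylor bound with expansion at an arbitrary interior point. -/
lemma taylor_bound_center {f : ℝ → ℝ} {a b C x₀ x : ℝ} {n : ℕ} (h : a < b)
    (hf : ContDiffOn ℝ (n + 1) f (Icc a b)) (hx₀ : x₀ ∈ Icc a b) (hx : x ∈ Icc a b)
    (hC : ∀ y ∈ Icc a b, |iteratedDerivWithin (n + 1) f (Icc a b) y| ≤ C) :
    |f x - taylorWithinEval f n (Icc a b) x₀ x| ≤
      (n ! : ℝ)⁻¹ * |x - x₀| ^ n * C * |x - x₀| := by
  have hf' : DifferentiableOn ℝ (iteratedDerivWithin n f (Icc a b)) (Icc a b) :=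
    hf.differentiableOn_iteratedDerivWithin (mod_cast n.lt_succ_self) (uniqueDiffOn_Icc h)
  set c := min x₀ x with hc
  set d := max x₀ x with hd
  have hC0 : 0 ≤ C := le_trans (abs_nonneg _) (hC x₀ hx₀)
  have hcd : Icc c d ⊆ Icc a b := Icc_subset_Icc (le_min hx₀.1 hx.1) (max_le hx₀.2 hx.2)
  have hdc : d - c = |x - x₀| := by
    rcases le_total x₀ x with hle | hle
    · rw [hd, hc, max_eq_right hle, min_eq_left hle, abs_of_nonneg (by linarith)]
    · rw [hd, hc, max_eq_left hle, min_eq_right hle, abs_of_nonpos (by linarith)]; ring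
  have A : ∀ t ∈ Icc c d, HasDerivWithinAt (fun y => taylorWithinEval f n (Icc a b) y x)
      (((n ! : ℝ)⁻¹ * (x - t) ^ n) • iteratedDerivWithin (n + 1) f (Icc a b) t) (Icc c d) t :=
    fun t ht => (hasDerivWithinAt_taylorWithinEval_at_Icc x h (hcd ht) hf.of_succ hf').mono hcd
  have bound : ∀ t ∈ Ico c d,
      ‖((n ! : ℝ)⁻¹ * (x - t) ^ n) • iteratedDerivWithin (n + 1) f (Icc a b) t‖ ≤
        (n ! : ℝ)⁻¹ * |x - x₀| ^ n * C := by
    intro t ht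
    have h2 : c ≤ t := ht.1
    have h3 : t ≤ d := ht.2.le
    have hxc : c ≤ x := min_le_right _ _
    have hxd : x ≤ d := le_max_right _ _
    have h1 : |x - t| ≤ |x - x₀| := by
      rw [← hdc, abs_le]; constructor <;> linarith
    have h4 := hC t (hcd (Ico_subset_Icc_self ht))
    rw [norm_smul, Real.norm_eq_abs, Real.norm_eq_abs, abs_mul, abs_pow, abs_inv, Nat.abs_cast]
    gcongr
  have key := norm_image_sub_le_of_norm_deriv_le_segment' A bound d (right_mem_Icc.2 min_le_max)
  rcases le_total x₀ x with hle | hle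
  · have hcx : c = x₀ := min_eq_left hle
    have hdx : d = x := max_eq_right hle
    rw [hdx, hcx] at key
    simpa [Real.norm_eq_abs, taylorWithinEval_self, hdx, hcx, hdc] using key.trans_eq (by rw [← hdc, hdx, hcx])
  · have hcx : c = x := min_eq_right hle
    have hdx : d = x₀ := max_eq_left hle
    rw [hdx, hcx] at key
    rw [taylorWithinEval_self] at key
    calc |f x - taylorWithinEval f n (Icc a b) x₀ x|
        = ‖taylorWithinEval f n (Icc a b) x₀ x - f x‖ := by
          rw [Real.norm_eq_abs, abs_sub_comm]
      _ ≤ (n ! : ℝ)⁻¹ * |x - x₀| ^ n * C * (x₀ - x) := key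
      _ = (n ! : ℝ)⁻¹ * |x - x₀| ^ n * C * |x - x₀| := by
          rw [show x₀ - x = |x - x₀| by rw [← hdc, hdx, hcx]]


lemma exists_fd_coeffs (k : ℕ) :
    ∃ a : Fin (2 * k + 1) → ℝ, ∀ i : Fin (2 * k + 1),
      ∑ j, a j * ((j : ℝ) - k) ^ (i : ℕ) = if (i : ℕ) = 1 then 1 else 0 := by
  set v : Fin (2 * k + 1) → ℝ := fun j => (j : ℝ) - (k : ℝ) with hv
  have hinj : Function.Injective v := by
    intro j₁ j₂ hj
    simp only [hv, sub_left_inj] at hj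
    exact Fin.ext (Nat.cast_injective hj)
  have hdet : (Matrix.vandermonde v).det ≠ 0 := Matrix.det_vandermonde_ne_zero_iff.mpr hinj
  have hdet' : ((Matrix.vandermonde v)ᵀ).det ≠ 0 := by rwa [Matrix.det_transpose]
  set M := (Matrix.vandermonde v)ᵀ with hM
  set e : Fin (2 * k + 1) → ℝ := fun i => if (i : ℕ) = 1 then 1 else 0 with he
  refine ⟨M⁻¹.mulVec e, fun i => ?_⟩
  have h3 : M.mulVec (M⁻¹.mulVec e) = e := by
    rw [Matrix.mulVec_mulVec, Matrix.mul_nonsing_inv _ (isUnit_iff_ne_zero.mpr hdet'),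
      Matrix.one_mulVec]
  have h4 := congrFun h3 i
  simp only [Matrix.mulVec, dotProduct, hM, Matrix.transpose_apply,
    Matrix.vandermonde_apply, he] at h4
  rw [← h4]
  exact Finset.sum_congr rfl fun j _ => by simp only [Matrix.mulVec, dotProduct, he, hM, hv]; rw [mul_comm]

/-- For every `k ∈ ℕ` there are absolute constants
`C₁ = C_{1,k}` and `C₂ = C_{2,k}` such that for all `(2k+1)`-times
(continuously) differentiable functions `f, g` on `[x-Δ, x+Δ]` and all
`δ ∈ (0, Δ/k)`,
`|f'(x) - g'(x)| ≤ (C₁/δ) ‖f-g‖_∞ + C₂ ‖f^{(2k+1)} - g^{(2k+1)}‖_∞ δ^{2k}`,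
the sup-norms being over `[x-Δ, x+Δ]` (expressed here through arbitrary
pointwise bounds `ε₁, ε₂`). -/
theorem deriv_difference_bound (k : ℕ) :
    ∃ C₁ C₂ : ℝ, ∀ (x Δ δ : ℝ) (f g : ℝ → ℝ),
      0 < Δ →
      δ ∈ Set.Ioo 0 (Δ / k) →
      ContDiffOn ℝ ((2 * k + 1 : ℕ) : ℕ∞) f (Set.Icc (x - Δ) (x + Δ)) →
      ContDiffOn ℝ ((2 * k + 1 : ℕ) : ℕ∞) g (Set.Icc (x - Δ) (x + Δ)) →
      ∀ ε₁ ε₂ : ℝ,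
        (∀ y ∈ Set.Icc (x - Δ) (x + Δ), |f y - g y| ≤ ε₁) →
        (∀ y ∈ Set.Icc (x - Δ) (x + Δ),
          |iteratedDerivWithin (2 * k + 1) f (Set.Icc (x - Δ) (x + Δ)) y -
            iteratedDerivWithin (2 * k + 1) g (Set.Icc (x - Δ) (x + Δ)) y| ≤ ε₂) →
        |derivWithin f (Set.Icc (x - Δ) (x + Δ)) x -
            derivWithin g (Set.Icc (x - Δ) (x + Δ)) x| ≤
          C₁ / δ * ε₁ + C₂ * ε₂ * δ ^ (2 * k) := by
  obtain ⟨a, ha⟩ := exists_fd_coeffs k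
  refine ⟨∑ j, |a j|, (∑ j, |a j|) * (k : ℝ) ^ (2 * k + 1) / (2 * k)!, ?_⟩
  intro x Δ δ f g hΔ hδ hf hg ε₁ ε₂ hε₁ hε₂
  obtain ⟨hδ0, hδ1⟩ := hδ
  rcases Nat.eq_zero_or_pos k with rfl | hk
  · exfalso; norm_num at hδ1; linarith
  have hk' : (0 : ℝ) < k := by exact_mod_cast hk
  set s := Set.Icc (x - Δ) (x + Δ) with hs
  have hab : x - Δ < x + Δ := by linarith
  have huniq : UniqueDiffOn ℝ s := uniqueDiffOn_Icc hab
  have hxmem : x ∈ s := ⟨by linarith, by linarith⟩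
  have hkδ : (k : ℝ) * δ < Δ := by
    have := (lt_div_iff₀ hk').mp hδ1
    linarith
  set h : ℝ → ℝ := f - g with hh_def
  have hh : ContDiffOn ℝ ((2 * k + 1 : ℕ) : ℕ∞) h s := hf.sub hg
  have hh2 : ContDiffOn ℝ ((2 * k : ℕ) + 1) h s := by exact_mod_cast hh
  have hε₂' : ∀ y ∈ s, |iteratedDerivWithin (2 * k + 1) h s y| ≤ ε₂ := fun y hy => by
    rw [hh_def, iteratedDerivWithin_sub hy huniq (hf y hy) (hg y hy)]; exact hε₂ y hy
  have hε₂0 : 0 ≤ ε₂ := le_trans (abs_nonneg _) (hε₂ x hxmem)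
  set c : Fin (2 * k + 1) → ℝ := fun j => (j : ℝ) - k with hc
  set p : Fin (2 * k + 1) → ℝ := fun j => x + c j * δ with hp
  have hcb : ∀ j, |c j| ≤ k := by
    intro j
    rw [hc, abs_le]
    have h1 : ((j : ℕ) : ℝ) ≤ 2 * k := by exact_mod_cast Nat.lt_succ_iff.mp j.isLt
    have h2 : (0 : ℝ) ≤ ((j : ℕ) : ℝ) := Nat.cast_nonneg _
    constructor <;> push_cast <;> linarith
  have hpmem : ∀ j, p j ∈ s := by
    intro j
    have h1 : c j * δ ≤ (k : ℝ) * δ :=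
      mul_le_mul_of_nonneg_right (le_of_abs_le (hcb j)) hδ0.le
    have h2 : -((k : ℝ) * δ) ≤ c j * δ := by
      nlinarith [neg_abs_le (c j), hδ0.le, hcb j]
    exact ⟨by simp only [hp]; linarith, by simp only [hp]; linarith⟩
  have hpx : ∀ j, p j - x = c j * δ := fun j => by rw [hp]; ring
  set H : ℕ → ℝ := fun i => iteratedDerivWithin i h s x with hH
  set T : Fin (2 * k + 1) → ℝ := fun j => taylorWithinEval h (2 * k) s x (p j) with hT
  have hsum : ∑ j, a j * T j = δ * H 1 := by
    have step1 : ∀ j : Fin (2 * k + 1), a j * T j =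
        ∑ i ∈ Finset.range (2 * k + 1), ((i ! : ℝ)⁻¹ * δ ^ i * H i) * (a j * c j ^ i) := by
      intro j
      simp only [hT]
      rw [taylor_within_apply, Finset.mul_sum]
      refine Finset.sum_congr rfl fun i _ => ?_
      rw [hpx j, smul_eq_mul, mul_pow, hH]
      ring
    rw [Finset.sum_congr rfl fun j _ => step1 j, Finset.sum_comm]
    have step2 : ∀ i ∈ Finset.range (2 * k + 1),
        (∑ j, ((i ! : ℝ)⁻¹ * δ ^ i * H i) * (a j * c j ^ i)) =
          if i = 1 then (i ! : ℝ)⁻¹ * δ ^ i * H i else 0 := by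
      intro i hi
      rw [← Finset.mul_sum, ha ⟨i, Finset.mem_range.mp hi⟩]
      split_ifs <;> simp
    rw [Finset.sum_congr rfl step2, Finset.sum_ite_eq' (Finset.range (2 * k + 1)) 1
      (fun i => (i ! : ℝ)⁻¹ * δ ^ i * H i)]
    have : (1 : ℕ) ∈ Finset.range (2 * k + 1) := by
      refine Finset.mem_range.mpr ?_
      omega
    rw [if_pos this]
    simp [Nat.factorial_one]
  have hH1 : H 1 = derivWithin f s x - derivWithin g s x := by
    have hdf : DifferentiableWithinAt ℝ f s x :=
      (hf.differentiableOn (by exact_mod_cast Nat.succ_ne_zero (2 * k))) x hxmem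
    have hdg : DifferentiableWithinAt ℝ g s x :=
      (hg.differentiableOn (by exact_mod_cast Nat.succ_ne_zero (2 * k))) x hxmem
    simp only [hH]
    rw [iteratedDerivWithin_one, hh_def]
    exact derivWithin_sub hdf hdg
  have hrem : ∀ j, |h (p j) - T j| ≤
      ((2 * k)! : ℝ)⁻¹ * ((k : ℝ) * δ) ^ (2 * k) * ε₂ * ((k : ℝ) * δ) := by
    intro j
    have hpjx : |p j - x| ≤ (k : ℝ) * δ := by
      rw [hpx, abs_mul, abs_of_pos hδ0]
      exact mul_le_mul_of_nonneg_right (hcb j) hδ0.le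
    have htb := taylor_bound_center (n := 2 * k) hab hh2 hxmem (hpmem j) hε₂'
    rw [hT]
    refine htb.trans ?_
    gcongr
  have hA0 : 0 ≤ ∑ j, |a j| := Finset.sum_nonneg fun j _ => abs_nonneg _
  have habs : |δ * H 1| ≤ (∑ j, |a j|) * ε₁ +
      (∑ j, |a j|) * (((2 * k)! : ℝ)⁻¹ * ((k : ℝ) * δ) ^ (2 * k) * ε₂ * ((k : ℝ) * δ)) := by
    rw [← hsum]
    have hdecomp : ∑ j, a j * T j =
        (∑ j, a j * h (p j)) - ∑ j, a j * (h (p j) - T j) := by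
      rw [← Finset.sum_sub_distrib]
      exact Finset.sum_congr rfl fun j _ => by ring
    rw [hdecomp]
    have t1 : |∑ j, a j * h (p j)| ≤ (∑ j, |a j|) * ε₁ := by
      refine (Finset.abs_sum_le_sum_abs _ _).trans ?_
      rw [Finset.sum_mul]
      refine Finset.sum_le_sum fun j _ => ?_
      rw [abs_mul]
      have := hε₁ (p j) (hpmem j)
      have hh3 : |h (p j)| ≤ ε₁ := by rw [hh_def]; simpa using this
      exact mul_le_mul_of_nonneg_left hh3 (abs_nonneg _)
    have t2 : |∑ j, a j * (h (p j) - T j)| ≤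
        (∑ j, |a j|) * (((2 * k)! : ℝ)⁻¹ * ((k : ℝ) * δ) ^ (2 * k) * ε₂ * ((k : ℝ) * δ)) := by
      refine (Finset.abs_sum_le_sum_abs _ _).trans ?_
      rw [Finset.sum_mul]
      refine Finset.sum_le_sum fun j _ => ?_
      rw [abs_mul]
      exact mul_le_mul_of_nonneg_left (hrem j) (abs_nonneg _)
    calc |(∑ j, a j * h (p j)) - ∑ j, a j * (h (p j) - T j)|
        ≤ |∑ j, a j * h (p j)| + |∑ j, a j * (h (p j) - T j)| := abs_sub _ _
      _ ≤ _ := add_le_add t1 t2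
  rw [← hH1]
  rw [← mul_le_mul_iff_of_pos_right hδ0]
  rw [show ((∑ j, |a j|) / δ * ε₁ +
      (∑ j, |a j|) * (k : ℝ) ^ (2 * k + 1) / (2 * k)! * ε₂ * δ ^ (2 * k)) * δ =
      (∑ j, |a j|) * ε₁ +
        (∑ j, |a j|) * (k : ℝ) ^ (2 * k + 1) / (2 * k)! * ε₂ * δ ^ (2 * k) * δ from by
    field_simp]
  calc |H 1| * δ = |δ * H 1| := by rw [abs_mul, abs_of_pos hδ0, mul_comm]
    _ ≤ (∑ j, |a j|) * ε₁ +
        (∑ j, |a j|) * (((2 * k)! : ℝ)⁻¹ * ((k : ℝ) * δ) ^ (2 * k) * ε₂ * ((k : ℝ) * δ)) := habs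
    _ = (∑ j, |a j|) * ε₁ +
        (∑ j, |a j|) * (k : ℝ) ^ (2 * k + 1) / (2 * k)! * ε₂ * δ ^ (2 * k) * δ := by
      rw [div_eq_mul_inv]
      ring
end
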